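/- For every x ∈ W3, G(x) = 3. -/
import Mathlib


/-- `w a b δ n = n + a⌊n/a⌋ + b⌊n/δ⌋`. -/
def w (a b δ n : ℕ) : ℕ := n + a * (n / a) + b * (n / δ)

/-- `W0` is the image of `w`. -/
def W0 (a b δ : ℕ) : Set ℕ := Set.range (w a b δ)

/-- `W3 = {x : x + δ ∈ W0 and x ∉ W0}`. -/
def W3 (a b δ : ℕ) : Set ℕ := {x | x + δ ∈ W0 a b δ ∧ x ∉ W0 a b δ}

/-- `mex T` is the least natural number not in `T`. -/
noncomputable def mex (T : Set ℕ) : ℕ := sInf {n | n ∉ T}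

set_option maxHeartbeats 1600000

namespace SG18

variable {a b δ : ℕ}


variable {a b δ : ℕ}

lemma w_zero : w a b δ 0 = 0 := by simp [w]

lemma w_ge (n : ℕ) : n ≤ w a b δ n := by simp only [w]; omega

lemma w_add_le (m k : ℕ) : w a b δ m + k ≤ w a b δ (m + k) := by
  have h1 : a * (m / a) ≤ a * ((m + k) / a) :=
    Nat.mul_le_mul_left a (Nat.div_le_div_right (Nat.le_add_right m k))
  have h2 : b * (m / δ) ≤ b * ((m + k) / δ) :=
    Nat.mul_le_mul_left b (Nat.div_le_div_right (Nat.le_add_right m k))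
  simp only [w]; omega

lemma w_mono {m p : ℕ} (h : m ≤ p) : w a b δ m ≤ w a b δ p := by
  have := w_add_le (a := a) (b := b) (δ := δ) m (p - m)
  have : w a b δ m + (p - m) ≤ w a b δ p := by
    rwa [Nat.add_sub_cancel' h] at this
  omega

lemma w_lt {m p : ℕ} (h : m < p) : w a b δ m < w a b δ p := by
  have := w_add_le (a := a) (b := b) (δ := δ) m (p - m)
  have : w a b δ m + (p - m) ≤ w a b δ p := by
    rwa [Nat.add_sub_cancel' (Nat.le_of_lt h)] at this
  omega

/-- Backward decomposition of `w n - w (n-t)` with pinned multiple lists. -/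
lemma wdown (h2a : 2 ≤ a) (hd1 : a < δ) (hd2 : δ < 2*a) (t n : ℕ)
    (htn : t ≤ n) (hT : t ≤ 2*a + 2*δ) :
    ∃ P D Q r s, w a b δ (n - t) + (t + P + Q) = w a b δ n
      ∧ P + n % a = t + r ∧ r < a
      ∧ D + n % δ = t + s ∧ s < δ
      ∧ n % a < a ∧ n % δ < δ
      ∧ (P = 0 ∨ P = a ∨ P = a*2 ∨ P = a*3 ∨ P = a*4 ∨ P = a*5 ∨ P = a*6)
      ∧ ((D = 0 ∧ Q = 0) ∨ (D = δ ∧ Q = b) ∨ (D = δ*2 ∧ Q = b*2) ∨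
         (D = δ*3 ∧ Q = b*3) ∨ (D = δ*4 ∧ Q = b*4)) := by
  have ha0 : 0 < a := by omega
  have hδ0 : 0 < δ := by omega
  set m := n - t with hm
  have hKle : m / a ≤ n / a := Nat.div_le_div_right (by omega)
  have hLle : m / δ ≤ n / δ := Nat.div_le_div_right (by omega)
  set K := n / a - m / a with hK
  set L := n / δ - m / δ with hL
  have eK : a * (n / a) = a * (m / a) + a * K := by
    rw [← Nat.mul_add, Nat.add_sub_cancel' hKle]
  have eL : δ * (n / δ) = δ * (m / δ) + δ * L := by
    rw [← Nat.mul_add, Nat.add_sub_cancel' hLle]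
  have eLb : b * (n / δ) = b * (m / δ) + b * L := by
    rw [← Nat.mul_add, Nat.add_sub_cancel' hLle]
  have dm1 := Nat.div_add_mod n a
  have dm2 := Nat.div_add_mod m a
  have dm3 := Nat.div_add_mod n δ
  have dm4 := Nat.div_add_mod m δ
  have mo1 : n % a < a := Nat.mod_lt _ ha0
  have mo2 : m % a < a := Nat.mod_lt _ ha0
  have mo3 : n % δ < δ := Nat.mod_lt _ hδ0
  have mo4 : m % δ < δ := Nat.mod_lt _ hδ0
  have hPrel : a * K + n % a = t + m % a := by omega
  have hDrel : δ * L + n % δ = t + m % δ := by omega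
  have hK6 : K ≤ 6 := by
    by_contra hc
    have : a * 7 ≤ a * K := Nat.mul_le_mul_left a (by omega)
    omega
  have hL4 : L ≤ 4 := by
    by_contra hc
    have : δ * 5 ≤ δ * L := Nat.mul_le_mul_left δ (by omega)
    omega
  refine ⟨a * K, δ * L, b * L, m % a, m % δ, ?_, hPrel, mo2, hDrel, mo4, mo1, mo3, ?_, ?_⟩
  · simp only [w]
    omega
  · have : K = 0 ∨ K = 1 ∨ K = 2 ∨ K = 3 ∨ K = 4 ∨ K = 5 ∨ K = 6 := by omega
    rcases this with h|h|h|h|h|h|h <;> rw [h] <;> omega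
  · have : L = 0 ∨ L = 1 ∨ L = 2 ∨ L = 3 ∨ L = 4 := by omega
    rcases this with h|h|h|h|h <;> rw [h] <;> omega

/-- Forward decomposition of `w (n+t) - w n`. -/
lemma wup (h2a : 2 ≤ a) (hd1 : a < δ) (hd2 : δ < 2*a) (t n : ℕ)
    (hT : t ≤ 2*a + 2*δ) :
    ∃ P D Q r s, w a b δ (n + t) = w a b δ n + (t + P + Q)
      ∧ P + r = t + n % a ∧ r < a
      ∧ D + s = t + n % δ ∧ s < δ
      ∧ n % a < a ∧ n % δ < δ
      ∧ (P = 0 ∨ P = a ∨ P = a*2 ∨ P = a*3 ∨ P = a*4 ∨ P = a*5 ∨ P = a*6)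
      ∧ ((D = 0 ∧ Q = 0) ∨ (D = δ ∧ Q = b) ∨ (D = δ*2 ∧ Q = b*2) ∨
         (D = δ*3 ∧ Q = b*3) ∨ (D = δ*4 ∧ Q = b*4)) := by
  have ha0 : 0 < a := by omega
  have hδ0 : 0 < δ := by omega
  set m := n + t with hm
  have hKle : n / a ≤ m / a := Nat.div_le_div_right (by omega)
  have hLle : n / δ ≤ m / δ := Nat.div_le_div_right (by omega)
  set K := m / a - n / a with hK
  set L := m / δ - n / δ with hL
  have eK : a * (m / a) = a * (n / a) + a * K := by
    rw [← Nat.mul_add, Nat.add_sub_cancel' hKle]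
  have eL : δ * (m / δ) = δ * (n / δ) + δ * L := by
    rw [← Nat.mul_add, Nat.add_sub_cancel' hLle]
  have eLb : b * (m / δ) = b * (n / δ) + b * L := by
    rw [← Nat.mul_add, Nat.add_sub_cancel' hLle]
  have dm1 := Nat.div_add_mod n a
  have dm2 := Nat.div_add_mod m a
  have dm3 := Nat.div_add_mod n δ
  have dm4 := Nat.div_add_mod m δ
  have mo1 : n % a < a := Nat.mod_lt _ ha0
  have mo2 : m % a < a := Nat.mod_lt _ ha0
  have mo3 : n % δ < δ := Nat.mod_lt _ hδ0
  have mo4 : m % δ < δ := Nat.mod_lt _ hδ0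
  have hPrel : a * K + m % a = t + n % a := by omega
  have hDrel : δ * L + m % δ = t + n % δ := by omega
  have hK6 : K ≤ 6 := by
    by_contra hc
    have : a * 7 ≤ a * K := Nat.mul_le_mul_left a (by omega)
    omega
  have hL4 : L ≤ 4 := by
    by_contra hc
    have : δ * 5 ≤ δ * L := Nat.mul_le_mul_left δ (by omega)
    omega
  refine ⟨a * K, δ * L, b * L, m % a, m % δ, ?_, hPrel, mo2, hDrel, mo4, mo1, mo3, ?_, ?_⟩
  · simp only [w]
    omega
  · have : K = 0 ∨ K = 1 ∨ K = 2 ∨ K = 3 ∨ K = 4 ∨ K = 5 ∨ K = 6 := by omega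
    rcases this with h|h|h|h|h|h|h <;> rw [h] <;> omega
  · have : L = 0 ∨ L = 1 ∨ L = 2 ∨ L = 3 ∨ L = 4 := by omega
    rcases this with h|h|h|h|h <;> rw [h] <;> omega



/-- no two w-values differ by a, b, or a+b -/
lemma no_diff (h2a : 2 ≤ a) (hd1 : a < δ) (hd2 : δ < 2*a) (hb : b = a + δ)
    {c : ℕ} (hc : c = a ∨ c = b ∨ c = a + b) (m p : ℕ) :
    w a b δ m + c ≠ w a b δ p := by
  intro h
  rcases le_or_gt m p with hmp | hmp
  · set t := p - m with ht
    have hpt : p = m + t := by omega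
    have h1 : w a b δ m + t ≤ w a b δ p := by rw [hpt]; exact w_add_le _ _
    have htc : t ≤ c := by omega
    obtain ⟨P, D, Q, r, s, he, hP, hr, hD, hs, hra, hrδ, hPl, hDl⟩ :=
      wup (b := b) h2a hd1 hd2 t m (by omega)
    rw [← hpt] at he
    rcases hc with rfl | rfl | rfl <;> omega
  · have := w_lt (a := a) (b := b) (δ := δ) hmp
    omega

lemma w_small (hd1 : a < δ) {x : ℕ} (h : x < a) : w a b δ x = x := by
  simp [w, Nat.div_eq_of_lt h, Nat.div_eq_of_lt (lt_trans h hd1)]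

lemma locate (hx : ¬ ∃ p, w a b δ p = x) :
    ∃ n j, x = w a b δ n + j ∧ 1 ≤ j ∧ x < w a b δ (n + 1) := by
  set N := Nat.findGreatest (fun m => w a b δ m ≤ x) x with hN
  have h0 : w a b δ 0 ≤ x := by
    have : w a b δ 0 = 0 := by simp [w]
    omega
  have hspec : w a b δ N ≤ x := by
    rw [hN]
    exact Nat.findGreatest_spec (P := fun m => w a b δ m ≤ x) (Nat.zero_le x) h0
  have hlt : w a b δ N < x := by
    rcases lt_or_eq_of_le hspec with h | h
    · exact h
    · exact absurd ⟨N, h⟩ hx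
  refine ⟨N, x - w a b δ N, by omega, by omega, ?_⟩
  by_contra hc
  push_neg at hc
  have hx1 : N + 1 ≤ x := by
    have := w_ge (a:=a) (b:=b) (δ:=δ) (N + 1)
    omega
  have := Nat.findGreatest_is_greatest (P := fun m => w a b δ m ≤ x)
    (Nat.lt_succ_self N) hx1
  exact this hc

lemma mex_eq {T : Set ℕ} {k : ℕ} (hk : k ∉ T) (h : ∀ i, i < k → i ∈ T) :
    mex T = k := by
  unfold mex
  apply le_antisymm
  · exact Nat.sInf_le hk
  · apply le_csInf ⟨k, hk⟩
    intro m hm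
    by_contra hc
    push_neg at hc
    exact hm (h m hc)


lemma split_wit (h2a : 2 ≤ a) (hd1 : a < δ) (hd2 : δ < 2*a) {n p c e : ℕ}
    (hp : w a b δ p + c = w a b δ n + e) (hcb : c ≤ 2*a+2*δ) (heb : e ≤ 2*a+2*δ) :
    ∃ t P D Q r s,
      ((w a b δ p + (t + P + Q) = w a b δ n ∧ P + n % a = t + r ∧ D + n % δ = t + s)
       ∨ (w a b δ p = w a b δ n + (t + P + Q) ∧ P + r = t + n % a ∧ D + s = t + n % δ))
      ∧ r < a ∧ s < δ ∧ n % a < a ∧ n % δ < δ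
      ∧ (P = 0 ∨ P = a ∨ P = a*2 ∨ P = a*3 ∨ P = a*4 ∨ P = a*5 ∨ P = a*6)
      ∧ ((D = 0 ∧ Q = 0) ∨ (D = δ ∧ Q = b) ∨ (D = δ*2 ∧ Q = b*2) ∨
         (D = δ*3 ∧ Q = b*3) ∨ (D = δ*4 ∧ Q = b*4)) := by
  rcases le_or_gt p n with hpn | hpn
  · have hw : w a b δ p + (n - p) ≤ w a b δ n := by
      have h := w_add_le (a := a) (b := b) (δ := δ) p (n - p)
      rwa [Nat.add_sub_cancel' hpn] at h
    obtain ⟨P, D, Q, r, s, h1, h2, h3, h4, h5, h6, h7, h8, h9⟩ :=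
      wdown (b := b) h2a hd1 hd2 (n - p) n (by omega) (by omega)
    have hnp : n - (n - p) = p := by omega
    rw [hnp] at h1
    exact ⟨n - p, P, D, Q, r, s, Or.inl ⟨h1, h2, h4⟩, h3, h5, h6, h7, h8, h9⟩
  · have hw : w a b δ n + (p - n) ≤ w a b δ p := by
      have h := w_add_le (a := a) (b := b) (δ := δ) n (p - n)
      rwa [Nat.add_sub_cancel' (le_of_lt hpn)] at h
    obtain ⟨P, D, Q, r, s, h1, h2, h3, h4, h5, h6, h7, h8, h9⟩ :=
      wup (b := b) h2a hd1 hd2 (p - n) n (by omega)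
    have hnp : n + (p - n) = p := by omega
    rw [hnp] at h1
    exact ⟨p - n, P, D, Q, r, s, Or.inr ⟨h1, h2, h4⟩, h3, h5, h6, h7, h8, h9⟩


lemma masterC (h2a : 2 ≤ a) (hd1 : a < δ) (hd2 : δ < 2*a) (hb : b = a + δ)
    {x n j : ℕ} (hxj : x = w a b δ n + j) (hj1 : 1 ≤ j) (hjb : j ≤ 2*a + δ)
    (hA : n % a = a - 1) (hD : n % δ = δ - 1) :
    (∃ p, w a b δ p + a = x)
  ∨ ((∃ p, w a b δ p = x + δ) ∧
      (((∃ p, w a b δ p + (a+b) = x) ∧ ¬(∃ p, w a b δ p + b = x))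
       ∨ ((∃ p, w a b δ p + b = x) ∧ (∃ p, w a b δ p + (2*a+b) = x))))
  ∨ ((¬∃ p, w a b δ p = x + δ) ∧
      ((∃ p, w a b δ p + b = x) ∨ (∃ p, w a b δ p + (a+b) = x)) ∧
      ((∃ p, w a b δ p + 2*a = x) ∨ (∃ p, w a b δ p + a = x + δ)) ∧
      ((∃ p, w a b δ p + 2*a = x)
        ∨ ((∃ p, w a b δ p + (a+b) = x) ∧ ¬(∃ p, w a b δ p + b = x))
        ∨ ((∃ p, w a b δ p + (2*a+b) = x) ∧ ¬(∃ p, w a b δ p + (a+b) = x))) ∧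
      ((∃ p, w a b δ p + (a+b) = x) ∨ (∃ p, w a b δ p + (2*a+b) = x)
        ∨ (∃ p, w a b δ p + 2*a = x))) := by
  have hna := Nat.mod_le n a
  have hnδ := Nat.mod_le n δ
  rcases le_or_gt j a with hc1 | hc1
  · left
    refine ⟨n - (a - j), ?_⟩
    obtain ⟨P, D, Q, r, s, e1, e2, e3, e4, e5, e6, e7, hPl, hDl⟩ :=
      wdown (b := b) h2a hd1 hd2 (a - j) n (by omega) (by omega)
    omega
  rcases le_or_gt j (2*a) with hc2 | hc2
  · -- 2C1
    right; right
    refine ⟨?_, ?_, ?_, ?_, ?_⟩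
    · rintro ⟨p, hp⟩
      rw [hxj] at hp
      obtain ⟨t, P, D, Q, r, s, hcs, hr, hs, hm1, hm2, hPl, hDl⟩ :=
        split_wit (b := b) h2a hd1 hd2 (show w a b δ p + 0 = w a b δ n + (j + δ) by omega)
          (by omega) (by omega)
      rcases hcs with ⟨e1, e2, e3⟩ | ⟨e1, e2, e3⟩ <;> omega
    · rcases le_or_gt (δ+1) j with h | h
      · left
        refine ⟨n - (a + δ - j), ?_⟩
        obtain ⟨P, D, Q, r, s, e1, e2, e3, e4, e5, e6, e7, hPl, hDl⟩ :=
          wdown (b := b) h2a hd1 hd2 (a + δ - j) n (by omega) (by omega)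
        omega
      · right
        refine ⟨n - (a + δ - j), ?_⟩
        obtain ⟨P, D, Q, r, s, e1, e2, e3, e4, e5, e6, e7, hPl, hDl⟩ :=
          wdown (b := b) h2a hd1 hd2 (a + δ - j) n (by omega) (by omega)
        omega
    · left
      refine ⟨n - (2*a - j), ?_⟩
      obtain ⟨P, D, Q, r, s, e1, e2, e3, e4, e5, e6, e7, hPl, hDl⟩ :=
        wdown (b := b) h2a hd1 hd2 (2*a - j) n (by omega) (by omega)
      omega
    · left
      refine ⟨n - (2*a - j), ?_⟩
      obtain ⟨P, D, Q, r, s, e1, e2, e3, e4, e5, e6, e7, hPl, hDl⟩ :=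
        wdown (b := b) h2a hd1 hd2 (2*a - j) n (by omega) (by omega)
      omega
    · right; right
      refine ⟨n - (2*a - j), ?_⟩
      obtain ⟨P, D, Q, r, s, e1, e2, e3, e4, e5, e6, e7, hPl, hDl⟩ :=
        wdown (b := b) h2a hd1 hd2 (2*a - j) n (by omega) (by omega)
      omega
  rcases le_or_gt j (3*a) with hc3 | hc3
  · -- C class3
    right; left
    constructor
    · refine ⟨n + (j - 2*a), ?_⟩
      obtain ⟨P, D, Q, r, s, e1, e2, e3, e4, e5, e6, e7, hPl, hDl⟩ :=
        wup (b := b) h2a hd1 hd2 (j - 2*a) n (by omega)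
      omega
    rcases le_or_gt j (a + δ) with h | h
    · right
      constructor
      · refine ⟨n - (a + δ - j), ?_⟩
        obtain ⟨P, D, Q, r, s, e1, e2, e3, e4, e5, e6, e7, hPl, hDl⟩ :=
          wdown (b := b) h2a hd1 hd2 (a + δ - j) n (by omega) (by omega)
        omega
      · refine ⟨n - (2*a + δ - j), ?_⟩
        obtain ⟨P, D, Q, r, s, e1, e2, e3, e4, e5, e6, e7, hPl, hDl⟩ :=
          wdown (b := b) h2a hd1 hd2 (2*a + δ - j) n (by omega) (by omega)
        omega
    · left
      constructor
      · refine ⟨n - (2*a + δ - j), ?_⟩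
        obtain ⟨P, D, Q, r, s, e1, e2, e3, e4, e5, e6, e7, hPl, hDl⟩ :=
          wdown (b := b) h2a hd1 hd2 (2*a + δ - j) n (by omega) (by omega)
        omega
      · rintro ⟨p, hp⟩
        rw [hxj] at hp
        obtain ⟨t, P, D, Q, r, s, hcs, hr, hs, hm1, hm2, hPl, hDl⟩ :=
          split_wit (b := b) h2a hd1 hd2 (show w a b δ p + (b) = w a b δ n + j by omega)
            (by omega) (by omega)
        rcases hcs with ⟨e1, e2, e3⟩ | ⟨e1, e2, e3⟩ <;> omega
  · -- 2C2
    right; right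
    refine ⟨?_, ?_, ?_, ?_, ?_⟩
    · rintro ⟨p, hp⟩
      rw [hxj] at hp
      obtain ⟨t, P, D, Q, r, s, hcs, hr, hs, hm1, hm2, hPl, hDl⟩ :=
        split_wit (b := b) h2a hd1 hd2 (show w a b δ p + 0 = w a b δ n + (j + δ) by omega)
          (by omega) (by omega)
      rcases hcs with ⟨e1, e2, e3⟩ | ⟨e1, e2, e3⟩ <;> omega
    · right
      refine ⟨n - (2*a + δ - j), ?_⟩
      obtain ⟨P, D, Q, r, s, e1, e2, e3, e4, e5, e6, e7, hPl, hDl⟩ :=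
        wdown (b := b) h2a hd1 hd2 (2*a + δ - j) n (by omega) (by omega)
      omega
    · right
      refine ⟨n + (j - 3*a), ?_⟩
      obtain ⟨P, D, Q, r, s, e1, e2, e3, e4, e5, e6, e7, hPl, hDl⟩ :=
        wup (b := b) h2a hd1 hd2 (j - 3*a) n (by omega)
      omega
    · right; left
      constructor
      · refine ⟨n - (2*a + δ - j), ?_⟩
        obtain ⟨P, D, Q, r, s, e1, e2, e3, e4, e5, e6, e7, hPl, hDl⟩ :=
          wdown (b := b) h2a hd1 hd2 (2*a + δ - j) n (by omega) (by omega)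
        omega
      · rintro ⟨p, hp⟩
        rw [hxj] at hp
        obtain ⟨t, P, D, Q, r, s, hcs, hr, hs, hm1, hm2, hPl, hDl⟩ :=
          split_wit (b := b) h2a hd1 hd2 (show w a b δ p + (b) = w a b δ n + j by omega)
            (by omega) (by omega)
        rcases hcs with ⟨e1, e2, e3⟩ | ⟨e1, e2, e3⟩ <;> omega
    · left
      refine ⟨n - (2*a + δ - j), ?_⟩
      obtain ⟨P, D, Q, r, s, e1, e2, e3, e4, e5, e6, e7, hPl, hDl⟩ :=
        wdown (b := b) h2a hd1 hd2 (2*a + δ - j) n (by omega) (by omega)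
      omega

lemma masterA (h2a : 2 ≤ a) (hd1 : a < δ) (hd2 : δ < 2*a) (hb : b = a + δ)
    {x n j : ℕ} (hxj : x = w a b δ n + j) (hj1 : 1 ≤ j) (hjb : j ≤ a)
    (hA : n % a = a - 1) (hD : ¬ n % δ = δ - 1) (hmδ : n % δ < δ) :
    (∃ p, w a b δ p + a = x)
  ∨ ((∃ p, w a b δ p = x + δ) ∧
      (((∃ p, w a b δ p + (a+b) = x) ∧ ¬(∃ p, w a b δ p + b = x))
       ∨ ((∃ p, w a b δ p + b = x) ∧ (∃ p, w a b δ p + (2*a+b) = x))))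
  ∨ ((¬∃ p, w a b δ p = x + δ) ∧
      ((∃ p, w a b δ p + b = x) ∨ (∃ p, w a b δ p + (a+b) = x)) ∧
      ((∃ p, w a b δ p + 2*a = x) ∨ (∃ p, w a b δ p + a = x + δ)) ∧
      ((∃ p, w a b δ p + 2*a = x)
        ∨ ((∃ p, w a b δ p + (a+b) = x) ∧ ¬(∃ p, w a b δ p + b = x))
        ∨ ((∃ p, w a b δ p + (2*a+b) = x) ∧ ¬(∃ p, w a b δ p + (a+b) = x))) ∧
      ((∃ p, w a b δ p + (a+b) = x) ∨ (∃ p, w a b δ p + (2*a+b) = x)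
        ∨ (∃ p, w a b δ p + 2*a = x))) := by
  have hna := Nat.mod_le n a
  have hnδ := Nat.mod_le n δ
  rcases le_or_gt (a - n % δ) j with hc1 | hc1
  · left
    refine ⟨n - (a - j), ?_⟩
    obtain ⟨P, D, Q, r, s, e1, e2, e3, e4, e5, e6, e7, hPl, hDl⟩ :=
      wdown (b := b) h2a hd1 hd2 (a - j) n (by omega) (by omega)
    omega
  rcases le_or_gt j (2*a - δ) with hc2 | hc2
  · -- A class3
    right; left
    constructor
    · refine ⟨n + (j + δ - a), ?_⟩
      obtain ⟨P, D, Q, r, s, e1, e2, e3, e4, e5, e6, e7, hPl, hDl⟩ :=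
        wup (b := b) h2a hd1 hd2 (j + δ - a) n (by omega)
      omega
    left
    constructor
    · refine ⟨n - (a - j), ?_⟩
      obtain ⟨P, D, Q, r, s, e1, e2, e3, e4, e5, e6, e7, hPl, hDl⟩ :=
        wdown (b := b) h2a hd1 hd2 (a - j) n (by omega) (by omega)
      omega
    · rintro ⟨p, hp⟩
      rw [hxj] at hp
      obtain ⟨t, P, D, Q, r, s, hcs, hr, hs, hm1, hm2, hPl, hDl⟩ :=
        split_wit (b := b) h2a hd1 hd2 (show w a b δ p + (b) = w a b δ n + j by omega)
          (by omega) (by omega)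
      rcases hcs with ⟨e1, e2, e3⟩ | ⟨e1, e2, e3⟩ <;> omega
  · -- A class2
    right; right
    refine ⟨?_, ?_, ?_, ?_, ?_⟩
    · rintro ⟨p, hp⟩
      rw [hxj] at hp
      obtain ⟨t, P, D, Q, r, s, hcs, hr, hs, hm1, hm2, hPl, hDl⟩ :=
        split_wit (b := b) h2a hd1 hd2 (show w a b δ p + 0 = w a b δ n + (j + δ) by omega)
          (by omega) (by omega)
      rcases hcs with ⟨e1, e2, e3⟩ | ⟨e1, e2, e3⟩ <;> omega
    · right
      refine ⟨n - (a - j), ?_⟩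
      obtain ⟨P, D, Q, r, s, e1, e2, e3, e4, e5, e6, e7, hPl, hDl⟩ :=
        wdown (b := b) h2a hd1 hd2 (a - j) n (by omega) (by omega)
      omega
    · right
      refine ⟨n + (j + δ - 2*a), ?_⟩
      obtain ⟨P, D, Q, r, s, e1, e2, e3, e4, e5, e6, e7, hPl, hDl⟩ :=
        wup (b := b) h2a hd1 hd2 (j + δ - 2*a) n (by omega)
      omega
    · right; left
      constructor
      · refine ⟨n - (a - j), ?_⟩
        obtain ⟨P, D, Q, r, s, e1, e2, e3, e4, e5, e6, e7, hPl, hDl⟩ :=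
          wdown (b := b) h2a hd1 hd2 (a - j) n (by omega) (by omega)
        omega
      · rintro ⟨p, hp⟩
        rw [hxj] at hp
        obtain ⟨t, P, D, Q, r, s, hcs, hr, hs, hm1, hm2, hPl, hDl⟩ :=
          split_wit (b := b) h2a hd1 hd2 (show w a b δ p + (b) = w a b δ n + j by omega)
            (by omega) (by omega)
        rcases hcs with ⟨e1, e2, e3⟩ | ⟨e1, e2, e3⟩ <;> omega
    · left
      refine ⟨n - (a - j), ?_⟩
      obtain ⟨P, D, Q, r, s, e1, e2, e3, e4, e5, e6, e7, hPl, hDl⟩ :=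
        wdown (b := b) h2a hd1 hd2 (a - j) n (by omega) (by omega)
      omega

lemma masterB (h2a : 2 ≤ a) (hd1 : a < δ) (hd2 : δ < 2*a) (hb : b = a + δ)
    {x n j : ℕ} (hxj : x = w a b δ n + j) (hj1 : 1 ≤ j) (hjb : j ≤ a + δ)
    (hA : ¬ n % a = a - 1) (hma : n % a < a) (hD : n % δ = δ - 1) :
    (∃ p, w a b δ p + a = x)
  ∨ ((∃ p, w a b δ p = x + δ) ∧
      (((∃ p, w a b δ p + (a+b) = x) ∧ ¬(∃ p, w a b δ p + b = x))
       ∨ ((∃ p, w a b δ p + b = x) ∧ (∃ p, w a b δ p + (2*a+b) = x))))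
  ∨ ((¬∃ p, w a b δ p = x + δ) ∧
      ((∃ p, w a b δ p + b = x) ∨ (∃ p, w a b δ p + (a+b) = x)) ∧
      ((∃ p, w a b δ p + 2*a = x) ∨ (∃ p, w a b δ p + a = x + δ)) ∧
      ((∃ p, w a b δ p + 2*a = x)
        ∨ ((∃ p, w a b δ p + (a+b) = x) ∧ ¬(∃ p, w a b δ p + b = x))
        ∨ ((∃ p, w a b δ p + (2*a+b) = x) ∧ ¬(∃ p, w a b δ p + (a+b) = x))) ∧
      ((∃ p, w a b δ p + (a+b) = x) ∨ (∃ p, w a b δ p + (2*a+b) = x)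
        ∨ (∃ p, w a b δ p + 2*a = x))) := by
  have hna := Nat.mod_le n a
  have hnδ := Nat.mod_le n δ
  rcases le_or_gt j a with hB1 | hB1
  · rcases le_or_gt (a - n % a) j with hc1 | hc1
    · left
      refine ⟨n - (a - j), ?_⟩
      obtain ⟨P, D, Q, r, s, e1, e2, e3, e4, e5, e6, e7, hPl, hDl⟩ :=
        wdown (b := b) h2a hd1 hd2 (a - j) n (by omega) (by omega)
      omega
    · -- 2B1
      right; right
      refine ⟨?_, ?_, ?_, ?_, ?_⟩
      · rintro ⟨p, hp⟩
        rw [hxj] at hp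
        obtain ⟨t, P, D, Q, r, s, hcs, hr, hs, hm1, hm2, hPl, hDl⟩ :=
          split_wit (b := b) h2a hd1 hd2 (show w a b δ p + 0 = w a b δ n + (j + δ) by omega)
            (by omega) (by omega)
        rcases hcs with ⟨e1, e2, e3⟩ | ⟨e1, e2, e3⟩ <;> omega
      · rcases le_or_gt (δ - a - n % a) j with h | h
        · left
          refine ⟨n - (δ - j), ?_⟩
          obtain ⟨P, D, Q, r, s, e1, e2, e3, e4, e5, e6, e7, hPl, hDl⟩ :=
            wdown (b := b) h2a hd1 hd2 (δ - j) n (by omega) (by omega)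
          omega
        · right
          refine ⟨n - (δ - j), ?_⟩
          obtain ⟨P, D, Q, r, s, e1, e2, e3, e4, e5, e6, e7, hPl, hDl⟩ :=
            wdown (b := b) h2a hd1 hd2 (δ - j) n (by omega) (by omega)
          omega
      · left
        refine ⟨n - (a - j), ?_⟩
        obtain ⟨P, D, Q, r, s, e1, e2, e3, e4, e5, e6, e7, hPl, hDl⟩ :=
          wdown (b := b) h2a hd1 hd2 (a - j) n (by omega) (by omega)
        omega
      · left
        refine ⟨n - (a - j), ?_⟩
        obtain ⟨P, D, Q, r, s, e1, e2, e3, e4, e5, e6, e7, hPl, hDl⟩ :=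
          wdown (b := b) h2a hd1 hd2 (a - j) n (by omega) (by omega)
        omega
      · right; right
        refine ⟨n - (a - j), ?_⟩
        obtain ⟨P, D, Q, r, s, e1, e2, e3, e4, e5, e6, e7, hPl, hDl⟩ :=
          wdown (b := b) h2a hd1 hd2 (a - j) n (by omega) (by omega)
        omega
  rcases le_or_gt j (2*a - n % a - 1) with hB2 | hB2
  · -- B class3 region1
    right; left
    constructor
    · refine ⟨n + (j - a), ?_⟩
      obtain ⟨P, D, Q, r, s, e1, e2, e3, e4, e5, e6, e7, hPl, hDl⟩ :=
        wup (b := b) h2a hd1 hd2 (j - a) n (by omega)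
      omega
    rcases le_or_gt j (δ - a - n % a - 1) with h1 | h1
    · left
      constructor
      · refine ⟨n - (δ - j), ?_⟩
        obtain ⟨P, D, Q, r, s, e1, e2, e3, e4, e5, e6, e7, hPl, hDl⟩ :=
          wdown (b := b) h2a hd1 hd2 (δ - j) n (by omega) (by omega)
        omega
      · rintro ⟨p, hp⟩
        rw [hxj] at hp
        obtain ⟨t, P, D, Q, r, s, hcs, hr, hs, hm1, hm2, hPl, hDl⟩ :=
          split_wit (b := b) h2a hd1 hd2 (show w a b δ p + (b) = w a b δ n + j by omega)
            (by omega) (by omega)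
        rcases hcs with ⟨e1, e2, e3⟩ | ⟨e1, e2, e3⟩ <;> omega
    rcases le_or_gt j (δ - n % a - 1) with h2 | h2
    · right
      constructor
      · refine ⟨n - (δ - j), ?_⟩
        obtain ⟨P, D, Q, r, s, e1, e2, e3, e4, e5, e6, e7, hPl, hDl⟩ :=
          wdown (b := b) h2a hd1 hd2 (δ - j) n (by omega) (by omega)
        omega
      · refine ⟨n - (a + δ - j), ?_⟩
        obtain ⟨P, D, Q, r, s, e1, e2, e3, e4, e5, e6, e7, hPl, hDl⟩ :=
          wdown (b := b) h2a hd1 hd2 (a + δ - j) n (by omega) (by omega)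
        omega
    · left
      constructor
      · refine ⟨n - (a + δ - j), ?_⟩
        obtain ⟨P, D, Q, r, s, e1, e2, e3, e4, e5, e6, e7, hPl, hDl⟩ :=
          wdown (b := b) h2a hd1 hd2 (a + δ - j) n (by omega) (by omega)
        omega
      · rintro ⟨p, hp⟩
        rw [hxj] at hp
        obtain ⟨t, P, D, Q, r, s, hcs, hr, hs, hm1, hm2, hPl, hDl⟩ :=
          split_wit (b := b) h2a hd1 hd2 (show w a b δ p + (b) = w a b δ n + j by omega)
            (by omega) (by omega)
        rcases hcs with ⟨e1, e2, e3⟩ | ⟨e1, e2, e3⟩ <;> omega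
  rcases le_or_gt j (3*a - n % a - 1) with hB3 | hB3
  · -- 2B2
    right; right
    refine ⟨?_, ?_, ?_, ?_, ?_⟩
    · rintro ⟨p, hp⟩
      rw [hxj] at hp
      obtain ⟨t, P, D, Q, r, s, hcs, hr, hs, hm1, hm2, hPl, hDl⟩ :=
        split_wit (b := b) h2a hd1 hd2 (show w a b δ p + 0 = w a b δ n + (j + δ) by omega)
          (by omega) (by omega)
      rcases hcs with ⟨e1, e2, e3⟩ | ⟨e1, e2, e3⟩ <;> omega
    · rcases le_or_gt j (a + δ - n % a - 1) with h | h
      · right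
        refine ⟨n - (a + δ - j), ?_⟩
        obtain ⟨P, D, Q, r, s, e1, e2, e3, e4, e5, e6, e7, hPl, hDl⟩ :=
          wdown (b := b) h2a hd1 hd2 (a + δ - j) n (by omega) (by omega)
        omega
      · left
        refine ⟨n - (a + δ - j), ?_⟩
        obtain ⟨P, D, Q, r, s, e1, e2, e3, e4, e5, e6, e7, hPl, hDl⟩ :=
          wdown (b := b) h2a hd1 hd2 (a + δ - j) n (by omega) (by omega)
        omega
    · rcases le_or_gt j (2*a) with h | h
      · left
        refine ⟨n - (2*a - j), ?_⟩
        obtain ⟨P, D, Q, r, s, e1, e2, e3, e4, e5, e6, e7, hPl, hDl⟩ :=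
          wdown (b := b) h2a hd1 hd2 (2*a - j) n (by omega) (by omega)
        omega
      · right
        refine ⟨n + (j - 2*a), ?_⟩
        obtain ⟨P, D, Q, r, s, e1, e2, e3, e4, e5, e6, e7, hPl, hDl⟩ :=
          wup (b := b) h2a hd1 hd2 (j - 2*a) n (by omega)
        omega
    · rcases le_or_gt j (2*a) with h | h
      · left
        refine ⟨n - (2*a - j), ?_⟩
        obtain ⟨P, D, Q, r, s, e1, e2, e3, e4, e5, e6, e7, hPl, hDl⟩ :=
          wdown (b := b) h2a hd1 hd2 (2*a - j) n (by omega) (by omega)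
        omega
      rcases le_or_gt j (a + δ - n % a - 1) with h2 | h2
      · right; left
        constructor
        · refine ⟨n - (a + δ - j), ?_⟩
          obtain ⟨P, D, Q, r, s, e1, e2, e3, e4, e5, e6, e7, hPl, hDl⟩ :=
            wdown (b := b) h2a hd1 hd2 (a + δ - j) n (by omega) (by omega)
          omega
        · rintro ⟨p, hp⟩
          rw [hxj] at hp
          obtain ⟨t, P, D, Q, r, s, hcs, hr, hs, hm1, hm2, hPl, hDl⟩ :=
            split_wit (b := b) h2a hd1 hd2 (show w a b δ p + (b) = w a b δ n + j by omega)
              (by omega) (by omega)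
          rcases hcs with ⟨e1, e2, e3⟩ | ⟨e1, e2, e3⟩ <;> omega
      · right; right
        constructor
        · refine ⟨n - (2*a + δ - j), ?_⟩
          obtain ⟨P, D, Q, r, s, e1, e2, e3, e4, e5, e6, e7, hPl, hDl⟩ :=
            wdown (b := b) h2a hd1 hd2 (2*a + δ - j) n (by omega) (by omega)
          omega
        · rintro ⟨p, hp⟩
          rw [hxj] at hp
          obtain ⟨t, P, D, Q, r, s, hcs, hr, hs, hm1, hm2, hPl, hDl⟩ :=
            split_wit (b := b) h2a hd1 hd2 (show w a b δ p + ((a+b)) = w a b δ n + j by omega)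
              (by omega) (by omega)
          rcases hcs with ⟨e1, e2, e3⟩ | ⟨e1, e2, e3⟩ <;> omega
    · rcases le_or_gt j (a + δ - n % a - 1) with h | h
      · left
        refine ⟨n - (a + δ - j), ?_⟩
        obtain ⟨P, D, Q, r, s, e1, e2, e3, e4, e5, e6, e7, hPl, hDl⟩ :=
          wdown (b := b) h2a hd1 hd2 (a + δ - j) n (by omega) (by omega)
        omega
      rcases le_or_gt j (2*a) with h2 | h2
      · right; right
        refine ⟨n - (2*a - j), ?_⟩
        obtain ⟨P, D, Q, r, s, e1, e2, e3, e4, e5, e6, e7, hPl, hDl⟩ :=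
          wdown (b := b) h2a hd1 hd2 (2*a - j) n (by omega) (by omega)
        omega
      · right; left
        refine ⟨n - (2*a + δ - j), ?_⟩
        obtain ⟨P, D, Q, r, s, e1, e2, e3, e4, e5, e6, e7, hPl, hDl⟩ :=
          wdown (b := b) h2a hd1 hd2 (2*a + δ - j) n (by omega) (by omega)
        omega
  · -- B class3 region2
    right; left
    constructor
    · refine ⟨n + (j - 2*a), ?_⟩
      obtain ⟨P, D, Q, r, s, e1, e2, e3, e4, e5, e6, e7, hPl, hDl⟩ :=
        wup (b := b) h2a hd1 hd2 (j - 2*a) n (by omega)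
      omega
    rcases le_or_gt j (a + δ - n % a - 1) with h | h
    · left
      constructor
      · refine ⟨n - (a + δ - j), ?_⟩
        obtain ⟨P, D, Q, r, s, e1, e2, e3, e4, e5, e6, e7, hPl, hDl⟩ :=
          wdown (b := b) h2a hd1 hd2 (a + δ - j) n (by omega) (by omega)
        omega
      · rintro ⟨p, hp⟩
        rw [hxj] at hp
        obtain ⟨t, P, D, Q, r, s, hcs, hr, hs, hm1, hm2, hPl, hDl⟩ :=
          split_wit (b := b) h2a hd1 hd2 (show w a b δ p + (b) = w a b δ n + j by omega)
            (by omega) (by omega)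
        rcases hcs with ⟨e1, e2, e3⟩ | ⟨e1, e2, e3⟩ <;> omega
    · right
      constructor
      · refine ⟨n - (a + δ - j), ?_⟩
        obtain ⟨P, D, Q, r, s, e1, e2, e3, e4, e5, e6, e7, hPl, hDl⟩ :=
          wdown (b := b) h2a hd1 hd2 (a + δ - j) n (by omega) (by omega)
        omega
      · refine ⟨n - (2*a + δ - j), ?_⟩
        obtain ⟨P, D, Q, r, s, e1, e2, e3, e4, e5, e6, e7, hPl, hDl⟩ :=
          wdown (b := b) h2a hd1 hd2 (2*a + δ - j) n (by omega) (by omega)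
        omega

/-- The master structure lemma. -/
lemma master (h2a : 2 ≤ a) (hd1 : a < δ) (hd2 : δ < 2*a) (hb : b = a + δ)
    {x : ℕ} (hx : ¬ ∃ p, w a b δ p = x) :
    (∃ p, w a b δ p + a = x)
  ∨ ((∃ p, w a b δ p = x + δ) ∧
      (((∃ p, w a b δ p + (a+b) = x) ∧ ¬(∃ p, w a b δ p + b = x))
       ∨ ((∃ p, w a b δ p + b = x) ∧ (∃ p, w a b δ p + (2*a+b) = x))))
  ∨ ((¬∃ p, w a b δ p = x + δ) ∧
      ((∃ p, w a b δ p + b = x) ∨ (∃ p, w a b δ p + (a+b) = x)) ∧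
      ((∃ p, w a b δ p + 2*a = x) ∨ (∃ p, w a b δ p + a = x + δ)) ∧
      ((∃ p, w a b δ p + 2*a = x)
        ∨ ((∃ p, w a b δ p + (a+b) = x) ∧ ¬(∃ p, w a b δ p + b = x))
        ∨ ((∃ p, w a b δ p + (2*a+b) = x) ∧ ¬(∃ p, w a b δ p + (a+b) = x))) ∧
      ((∃ p, w a b δ p + (a+b) = x) ∨ (∃ p, w a b δ p + (2*a+b) = x)
        ∨ (∃ p, w a b δ p + 2*a = x))) := by
  obtain ⟨n, j, hxj, hj1, hjlt⟩ := locate hx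
  obtain ⟨P₁, D₁, Q₁, r₁, s₁, hg, hgP, hgr, hgD, hgs, hma, hmδ, hgPl, hgDl⟩ :=
    wup (b := b) h2a hd1 hd2 1 n (by omega)
  by_cases hA : n % a = a - 1 <;> by_cases hD : n % δ = δ - 1
  · exact masterC h2a hd1 hd2 hb hxj hj1 (by omega) hA hD
  · exact masterA h2a hd1 hd2 hb hxj hj1 (by omega) hA hD hmδ
  · exact masterB h2a hd1 hd2 hb hxj hj1 (by omega) hA hma hD
  · exfalso; omega




/-- The Sprague–Grundy specification at a point. -/
def SP (a b δ : ℕ) (G : ℕ → ℕ) (x : ℕ) : Prop :=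
  ((∃ p, w a b δ p = x) → G x = 0) ∧
  ((∃ p, w a b δ p + a = x) → G x = 1) ∧
  (¬(∃ p, w a b δ p = x) → ¬(∃ p, w a b δ p + a = x) →
     (∃ p, w a b δ p = x + δ) → G x = 3) ∧
  (¬(∃ p, w a b δ p = x) → ¬(∃ p, w a b δ p + a = x) →
     ¬(∃ p, w a b δ p = x + δ) → G x = 2)

lemma sp_cases {G : ℕ → ℕ} {y : ℕ} (h : SP a b δ G y) :
    ((∃ p, w a b δ p = y) ∧ G y = 0)
  ∨ ((∃ p, w a b δ p + a = y) ∧ G y = 1)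
  ∨ ((∃ p, w a b δ p = y + δ) ∧ ¬(∃ p, w a b δ p = y) ∧
       ¬(∃ p, w a b δ p + a = y) ∧ G y = 3)
  ∨ (¬(∃ p, w a b δ p = y) ∧ ¬(∃ p, w a b δ p + a = y) ∧
       ¬(∃ p, w a b δ p = y + δ) ∧ G y = 2) := by
  classical
  by_cases h0 : ∃ p, w a b δ p = y
  · exact Or.inl ⟨h0, h.1 h0⟩
  by_cases h1 : ∃ p, w a b δ p + a = y
  · exact Or.inr (Or.inl ⟨h1, h.2.1 h1⟩)
  by_cases h3 : ∃ p, w a b δ p = y + δ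
  · exact Or.inr (Or.inr (Or.inl ⟨h3, h0, h1, h.2.2.1 h0 h1 h3⟩))
  · exact Or.inr (Or.inr (Or.inr ⟨h0, h1, h3, h.2.2.2 h0 h1 h3⟩))

lemma ge_a (hd1 : a < δ) {x : ℕ} (hx : ¬ ∃ p, w a b δ p = x) : a ≤ x := by
  by_contra hc
  push_neg at hc
  exact hx ⟨x, w_small hd1 hc⟩

lemma step (h2a : 2 ≤ a) (hd1 : a < δ) (hd2 : δ < 2*a) (hb : b = a + δ)
    (G : ℕ → ℕ)
    (hG : ∀ x, G x = mex {v | ∃ s ∈ ({a, b, a + b} : Set ℕ), s ≤ x ∧ v = G (x - s)})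
    (x : ℕ) (IH : ∀ y, y < x → SP a b δ G y) : SP a b δ G x := by
  have hmem : ∀ v : ℕ,
      (v ∈ {v | ∃ s ∈ ({a, b, a + b} : Set ℕ), s ≤ x ∧ v = G (x - s)}) ↔
      ((a ≤ x ∧ v = G (x - a)) ∨ (b ≤ x ∧ v = G (x - b)) ∨
        (a + b ≤ x ∧ v = G (x - (a + b)))) := by
    intro v
    constructor
    · rintro ⟨s, hs, hsx, hv⟩
      simp only [Set.mem_insert_iff, Set.mem_singleton_iff] at hs
      rcases hs with rfl | rfl | rfl
      · exact Or.inl ⟨hsx, hv⟩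
      · exact Or.inr (Or.inl ⟨hsx, hv⟩)
      · exact Or.inr (Or.inr ⟨hsx, hv⟩)
    · rintro (⟨h1, h2⟩ | ⟨h1, h2⟩ | ⟨h1, h2⟩)
      · exact ⟨a, by simp, h1, h2⟩
      · exact ⟨b, by simp, h1, h2⟩
      · exact ⟨a + b, by simp, h1, h2⟩
  have hb0 : 0 < b := by omega
  refine ⟨?_, ?_, ?_, ?_⟩
  · -- x ∈ W0 : G x = 0
    rintro ⟨m, hm⟩
    rw [hG x]
    refine mex_eq ?_ (by omega)
    intro h0
    rw [hmem 0] at h0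
    rcases h0 with ⟨hsx, hv⟩ | ⟨hsx, hv⟩ | ⟨hsx, hv⟩
    · rcases sp_cases (IH (x - a) (by omega)) with ⟨⟨q, hq⟩, hg⟩ | ⟨_, hg⟩ |
        ⟨_, _, _, hg⟩ | ⟨_, _, _, hg⟩
      · exact no_diff h2a hd1 hd2 hb (Or.inl rfl) q m (by omega)
      all_goals omega
    · rcases sp_cases (IH (x - b) (by omega)) with ⟨⟨q, hq⟩, hg⟩ | ⟨_, hg⟩ |
        ⟨_, _, _, hg⟩ | ⟨_, _, _, hg⟩
      · exact no_diff h2a hd1 hd2 hb (Or.inr (Or.inl rfl)) q m (by omega)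
      all_goals omega
    · rcases sp_cases (IH (x - (a + b)) (by omega)) with ⟨⟨q, hq⟩, hg⟩ | ⟨_, hg⟩ |
        ⟨_, _, _, hg⟩ | ⟨_, _, _, hg⟩
      · exact no_diff h2a hd1 hd2 hb (Or.inr (Or.inr rfl)) q m (by omega)
      all_goals omega
  · -- x ∈ W0 + a : G x = 1
    rintro ⟨m, hm⟩
    rw [hG x]
    refine mex_eq ?_ ?_
    · intro h1
      rw [hmem 1] at h1
      rcases h1 with ⟨hsx, hv⟩ | ⟨hsx, hv⟩ | ⟨hsx, hv⟩
      · rcases sp_cases (IH (x - a) (by omega)) with ⟨_, hg⟩ | ⟨⟨q, hq⟩, hg⟩ |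
          ⟨_, _, _, hg⟩ | ⟨_, _, _, hg⟩
        · omega
        · exact no_diff h2a hd1 hd2 hb (Or.inl rfl) q m (by omega)
        all_goals omega
      · rcases sp_cases (IH (x - b) (by omega)) with ⟨_, hg⟩ | ⟨⟨q, hq⟩, hg⟩ |
          ⟨_, _, _, hg⟩ | ⟨_, _, _, hg⟩
        · omega
        · exact no_diff h2a hd1 hd2 hb (Or.inr (Or.inl rfl)) q m (by omega)
        all_goals omega
      · rcases sp_cases (IH (x - (a + b)) (by omega)) with ⟨_, hg⟩ | ⟨⟨q, hq⟩, hg⟩ |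
          ⟨_, _, _, hg⟩ | ⟨_, _, _, hg⟩
        · omega
        · exact no_diff h2a hd1 hd2 hb (Or.inr (Or.inr rfl)) q m (by omega)
        all_goals omega
    · intro i hi
      have hi0 : i = 0 := by omega
      subst hi0
      rw [hmem 0]
      exact Or.inl ⟨by omega, ((IH (x - a) (by omega)).1 ⟨m, by omega⟩).symm⟩
  · -- class 3
    intro hx0 hx1 hx3
    obtain ⟨m₃, hm₃⟩ := hx3
    have hax : a ≤ x := ge_a hd1 hx0
    rcases master h2a hd1 hd2 hb hx0 with h | ⟨_, hKEY⟩ | ⟨hne, _⟩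
    · exact absurd h hx1
    swap
    · exact absurd ⟨m₃, hm₃⟩ hne
    -- G (x - a) = 2
    have hGa : G (x - a) = 2 := by
      refine (IH (x - a) (by omega)).2.2.2 ?_ ?_ ?_
      · rintro ⟨r, hr⟩
        exact hx1 ⟨r, by omega⟩
      · rintro ⟨r, hr⟩
        exact no_diff h2a hd1 hd2 hb (Or.inr (Or.inr rfl)) r m₃ (by omega)
      · rintro ⟨r, hr⟩
        exact no_diff h2a hd1 hd2 hb (Or.inl rfl) r m₃ (by omega)
    rcases hKEY with ⟨⟨p, hp⟩, hnb⟩ | ⟨⟨p, hp⟩, ⟨q, hq⟩⟩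
    · -- x-(a+b) ∈ W0, x-b ∉ W0
      have hGab : G (x - (a + b)) = 0 :=
        (IH _ (by omega)).1 ⟨p, by omega⟩
      have hGb : G (x - b) = 1 :=
        (IH _ (by omega)).2.1 ⟨p, by omega⟩
      rw [hG x]
      refine mex_eq ?_ ?_
      · intro h3
        rw [hmem 3] at h3
        omega
      · intro i hi
        rw [hmem i]
        have : i = 0 ∨ i = 1 ∨ i = 2 := by omega
        rcases this with rfl | rfl | rfl
        · exact Or.inr (Or.inr ⟨by omega, by omega⟩)
        · exact Or.inr (Or.inl ⟨by omega, by omega⟩)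
        · exact Or.inl ⟨by omega, by omega⟩
    · -- x-b ∈ W0, x-(2a+b) ∈ W0
      have hGb : G (x - b) = 0 :=
        (IH _ (by omega)).1 ⟨p, by omega⟩
      have hGab : G (x - (a + b)) = 1 :=
        (IH _ (by omega)).2.1 ⟨q, by omega⟩
      rw [hG x]
      refine mex_eq ?_ ?_
      · intro h3
        rw [hmem 3] at h3
        omega
      · intro i hi
        rw [hmem i]
        have : i = 0 ∨ i = 1 ∨ i = 2 := by omega
        rcases this with rfl | rfl | rfl
        · exact Or.inr (Or.inl ⟨by omega, by omega⟩)
        · exact Or.inr (Or.inr ⟨by omega, by omega⟩)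
        · exact Or.inl ⟨by omega, by omega⟩
  · -- class 2
    intro hx0 hx1 hx3
    have hax : a ≤ x := ge_a hd1 hx0
    rcases master h2a hd1 hd2 hb hx0 with h | ⟨h3', _⟩ | ⟨_, hI, hII, hIII, hIV⟩
    · exact absurd h hx1
    · exact absurd h3' hx3
    rw [hG x]
    refine mex_eq ?_ ?_
    · intro h2T
      rw [hmem 2] at h2T
      rcases h2T with ⟨hsx, hv⟩ | ⟨hsx, hv⟩ | ⟨hsx, hv⟩
      · -- s = a
        rcases hII with ⟨q, hq⟩ | ⟨q, hq⟩
        · have : G (x - a) = 1 := (IH _ (by omega)).2.1 ⟨q, by omega⟩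
          omega
        · by_cases hc1 : ∃ r, w a b δ r + a = x - a
          · have : G (x - a) = 1 := (IH _ (by omega)).2.1 hc1
            omega
          · have : G (x - a) = 3 := by
              refine (IH _ (by omega)).2.2.1 ?_ hc1 ⟨q, by omega⟩
              rintro ⟨r, hr⟩
              exact hx1 ⟨r, by omega⟩
            omega
      · -- s = b
        rcases hI with ⟨p, hp⟩ | ⟨p, hp⟩
        · have : G (x - b) = 0 := (IH _ (by omega)).1 ⟨p, by omega⟩
          omega
        · have : G (x - b) = 1 := (IH _ (by omega)).2.1 ⟨p, by omega⟩
          omega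
      · -- s = a + b
        rcases hIV with ⟨p, hp⟩ | ⟨p, hp⟩ | ⟨p, hp⟩
        · have : G (x - (a + b)) = 0 := (IH _ (by omega)).1 ⟨p, by omega⟩
          omega
        · have : G (x - (a + b)) = 1 := (IH _ (by omega)).2.1 ⟨p, by omega⟩
          omega
        · by_cases hc0 : ∃ r, w a b δ r = x - (a + b)
          · have : G (x - (a + b)) = 0 := (IH _ (by omega)).1 hc0
            omega
          by_cases hc1 : ∃ r, w a b δ r + a = x - (a + b)
          · have : G (x - (a + b)) = 1 := (IH _ (by omega)).2.1 hc1
            omega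
          · have : G (x - (a + b)) = 3 :=
              (IH _ (by omega)).2.2.1 hc0 hc1 ⟨p, by omega⟩
            omega
    · intro i hi
      have : i = 0 ∨ i = 1 := by omega
      rcases this with rfl | rfl
      · rw [hmem 0]
        rcases hI with ⟨p, hp⟩ | ⟨p, hp⟩
        · exact Or.inr (Or.inl ⟨by omega,
            ((IH (x - b) (by omega)).1 ⟨p, by omega⟩).symm⟩)
        · exact Or.inr (Or.inr ⟨by omega,
            ((IH (x - (a + b)) (by omega)).1 ⟨p, by omega⟩).symm⟩)
      · rw [hmem 1]
        rcases hIII with ⟨p, hp⟩ | ⟨⟨p, hp⟩, -⟩ | ⟨⟨p, hp⟩, -⟩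
        · exact Or.inl ⟨by omega,
            ((IH (x - a) (by omega)).2.1 ⟨p, by omega⟩).symm⟩
        · exact Or.inr (Or.inl ⟨by omega,
            ((IH (x - b) (by omega)).2.1 ⟨p, by omega⟩).symm⟩)
        · exact Or.inr (Or.inr ⟨by omega,
            ((IH (x - (a + b)) (by omega)).2.1 ⟨p, by omega⟩).symm⟩)

lemma all_SP (h2a : 2 ≤ a) (hd1 : a < δ) (hd2 : δ < 2*a) (hb : b = a + δ)
    (G : ℕ → ℕ)
    (hG : ∀ x, G x = mex {v | ∃ s ∈ ({a, b, a + b} : Set ℕ), s ≤ x ∧ v = G (x - s)}) :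
    ∀ x, SP a b δ G x := by
  intro x
  induction x using Nat.strong_induction_on with
  | _ x IH => exact step h2a hd1 hd2 hb G hG x IH


end SG18

theorem stmt_18 (a δ : ℕ) (ha : 0 < a) (hlt : a < δ) (hlt2 : δ < 2 * a)
    (hgcd : Nat.gcd a δ = 1) (b : ℕ) (hb : b = a + δ)
    (G : ℕ → ℕ)
    (hG : ∀ x, G x = mex {v | ∃ s ∈ ({a, b, a + b} : Set ℕ), s ≤ x ∧ v = G (x - s)}) :
    ∀ x ∈ W3 a b δ, G x = 3 := by
  have h2a : 2 ≤ a := by omega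
  intro x hx3
  obtain ⟨hmem3, hnot⟩ := hx3
  obtain ⟨m₃, hm₃⟩ := Set.mem_range.mp hmem3
  have hx0 : ¬ ∃ p, w a b δ p = x := fun ⟨p, hp⟩ => hnot ⟨p, hp⟩
  refine (SG18.all_SP h2a hlt hlt2 hb G hG x).2.2.1 hx0 ?_ ⟨m₃, hm₃⟩
  rintro ⟨q, hq⟩
  exact SG18.no_diff h2a hlt hlt2 hb (Or.inr (Or.inl rfl)) q m₃ (by omega)
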